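/- Let n be even with n > 7, let α = (3, 5, 4) and β = (3, 4, ..., n) be permutations of {1, ..., n}, and set τ = βαβ⁻¹αβ⁻¹α⁻¹βα⁻¹. Then the three permutations (βα⁻¹)², τ, and (αβ⁻¹)⁻¹τ(αβ⁻¹) generate the alternating group on {3, ..., n}. -/

import Mathlib

open Equiv Equiv.Perm Subgroup
open Fin.NatCast

theorem Equiv.Perm.inv_apply_self {α : Type*} (f : Equiv.Perm α) (x : α) : f⁻¹ (f x) = x :=
  Equiv.symm_apply_apply f x

theorem Equiv.Perm.apply_inv_self {α : Type*} (f : Equiv.Perm α) (x : α) : f (f⁻¹ x) = x :=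
  Equiv.apply_symm_apply f x


private def cyc3 {α : Type*} [DecidableEq α] (x y z : α) : Equiv.Perm α :=
  Equiv.swap x z * Equiv.swap x y

section cyc3
variable {α : Type*} [DecidableEq α] (x y z w : α)

private lemma cyc3_fst (hxy : x ≠ y) (hyz : y ≠ z) : cyc3 x y z x = y := by
  simp [cyc3, Equiv.swap_apply_def, Ne.symm hxy, hyz]

private lemma cyc3_snd : cyc3 x y z y = z := by
  simp [cyc3, Equiv.swap_apply_def]

private lemma cyc3_thd (hxz : x ≠ z) (hyz : y ≠ z) : cyc3 x y z z = x := by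
  simp [cyc3, Equiv.swap_apply_def, Ne.symm hxz, Ne.symm hyz]

private lemma cyc3_fix (hx : w ≠ x) (hy : w ≠ y) (hz : w ≠ z) : cyc3 x y z w = w := by
  simp [cyc3, Equiv.swap_apply_def, hx, hy, hz]

private lemma cyc3_conj (g : Equiv.Perm α) :
    g * cyc3 x y z * g⁻¹ = cyc3 (g x) (g y) (g z) := by
  rw [show g * cyc3 x y z * g⁻¹
      = (g * Equiv.swap x z * g⁻¹) * (g * Equiv.swap x y * g⁻¹) by
    simp [cyc3, mul_assoc]]
  rw [← Equiv.swap_apply_apply, ← Equiv.swap_apply_apply]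
  rfl

private lemma cyc3_sign [Fintype α] (hxy : x ≠ y) (hxz : x ≠ z) :
    Equiv.Perm.sign (cyc3 x y z) = 1 := by
  simp [cyc3, Equiv.Perm.sign_swap hxz, Equiv.Perm.sign_swap hxy]

end cyc3

section ids
variable {α : Type*} [DecidableEq α] (x y z a b : α)

private lemma swap_pair_id1 (hxy : x ≠ y) (hxz : x ≠ z) (hyz : y ≠ z) :
    Equiv.swap y z * Equiv.swap x y = Equiv.swap x y * Equiv.swap x z := by
  ext u
  simp only [Equiv.Perm.mul_apply, Equiv.swap_apply_def]
  rcases eq_or_ne u x with rfl | hux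
  · simp [hxy, hxz, hxy.symm, hxz.symm, hyz, hyz.symm]
  rcases eq_or_ne u y with rfl | huy
  · simp [hxy, hxz, hxy.symm, hxz.symm, hyz, hyz.symm]
  rcases eq_or_ne u z with rfl | huz
  · simp [hxy, hxz, hxy.symm, hxz.symm, hyz, hyz.symm]
  simp [hux, huy, huz]

private lemma swap_pair_id2 (hxy : x ≠ y) (hab : a ≠ b)
    (hax : a ≠ x) (hay : a ≠ y) (hbx : b ≠ x) (hby : b ≠ y) :
    Equiv.swap a b * Equiv.swap x y = cyc3 x y a * (cyc3 x y b)⁻¹ * cyc3 x y a := by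
  ext u
  simp only [cyc3, mul_inv_rev, Equiv.swap_inv, Equiv.Perm.mul_apply, Equiv.swap_apply_def]
  rcases eq_or_ne u x with rfl | hux
  · simp [hxy, hab, hax, hay, hbx, hby, hxy.symm, hab.symm, hax.symm, hay.symm, hbx.symm, hby.symm]
  rcases eq_or_ne u y with rfl | huy
  · simp [hxy, hab, hax, hay, hbx, hby, hxy.symm, hab.symm, hax.symm, hay.symm, hbx.symm, hby.symm]
  rcases eq_or_ne u a with rfl | hua
  · simp [hxy, hab, hax, hay, hbx, hby, hxy.symm, hab.symm, hax.symm, hay.symm, hbx.symm, hby.symm]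
  rcases eq_or_ne u b with rfl | hub
  · simp [hxy, hab, hax, hay, hbx, hby, hxy.symm, hab.symm, hax.symm, hay.symm, hbx.symm, hby.symm]
  simp [hux, huy, hua, hub]

private lemma cyc3_mul_T4 (hxy : x ≠ y) (hxz : x ≠ z) (hxa : x ≠ a) (hyz : y ≠ z)
    (hya : y ≠ a) (hza : z ≠ a) :
    cyc3 a x z * cyc3 x y z = cyc3 x y a := by
  ext u
  simp only [cyc3, Equiv.Perm.mul_apply, Equiv.swap_apply_def]
  rcases eq_or_ne u x with rfl | hux
  · simp [hxy, hxz, hxa, hyz, hya, hza, hxy.symm, hxz.symm, hxa.symm, hyz.symm, hya.symm, hza.symm]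
  rcases eq_or_ne u y with rfl | huy
  · simp [hxy, hxz, hxa, hyz, hya, hza, hxy.symm, hxz.symm, hxa.symm, hyz.symm, hya.symm, hza.symm]
  rcases eq_or_ne u z with rfl | huz
  · simp [hxy, hxz, hxa, hyz, hya, hza, hxy.symm, hxz.symm, hxa.symm, hyz.symm, hya.symm, hza.symm]
  rcases eq_or_ne u a with rfl | hua
  · simp [hxy, hxz, hxa, hyz, hya, hza, hxy.symm, hxz.symm, hxa.symm, hyz.symm, hya.symm, hza.symm]
  simp [hux, huy, huz, hua]

end ids



private theorem aux (n : ℕ) (hn : 7 < n)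
    (d c τ P : Equiv.Perm (Fin (n + 1)))
    (hc : c = d * d) (hPd : P = d⁻¹ * τ * d)
    (hd3 : d ((3:ℕ) : Fin (n+1)) = ((5:ℕ) : Fin (n+1)))
    (hd4 : d ((4:ℕ) : Fin (n+1)) = ((3:ℕ) : Fin (n+1)))
    (hdi : ∀ i : ℕ, 5 ≤ i → i < n → d ((i:ℕ) : Fin (n+1)) = ((i+1 : ℕ) : Fin (n+1)))
    (hdn : d ((n:ℕ) : Fin (n+1)) = ((4:ℕ) : Fin (n+1)))
    (hdlow : ∀ x : Fin (n+1), x.val < 3 → d x = x)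
    (hτ3 : τ ((3:ℕ):Fin (n+1)) = ((n:ℕ):Fin (n+1)))
    (hτ4 : τ ((4:ℕ):Fin (n+1)) = ((6:ℕ):Fin (n+1)))
    (hτ5 : τ ((5:ℕ):Fin (n+1)) = ((3:ℕ):Fin (n+1)))
    (hτ6 : τ ((6:ℕ):Fin (n+1)) = ((5:ℕ):Fin (n+1)))
    (hτn : τ ((n:ℕ):Fin (n+1)) = ((4:ℕ):Fin (n+1)))
    (hτfix : ∀ x : Fin (n+1), x.val ≠ 3 → x.val ≠ 4 → x.val ≠ 5 → x.val ≠ 6 → x.val ≠ n →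
      τ x = x)
    (σ : Equiv.Perm (Fin (n+1))) (hσs : Equiv.Perm.sign σ = 1)
    (hσf : ∀ x : Fin (n+1), x.val < 3 → σ x = x) :
    σ ∈ Subgroup.closure ({c, τ, P} : Set (Equiv.Perm (Fin (n+1)))) := by
  have FV : ∀ i : ℕ, i ≤ n → ((i : Fin (n+1))).val = i := by
    intro i h; rw [Fin.val_natCast]; exact Nat.mod_eq_of_lt (by omega)
  have Fself : ∀ x : Fin (n+1), ((x.val : ℕ) : Fin (n+1)) = x := fun x => Fin.cast_val_eq_self x
  have FNe : ∀ i j : ℕ, i ≤ n → j ≤ n → i ≠ j → ((i : Fin (n+1))) ≠ ((j : Fin (n+1))) := by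
    intro i j hi hj hij h
    apply hij
    have := congrArg Fin.val h
    rwa [FV i hi, FV j hj] at this
  have NeV : ∀ (x : Fin (n+1)) (k : ℕ), k ≤ n → x ≠ ((k:ℕ) : Fin (n+1)) → x.val ≠ k := by
    intro x k hk hne h
    exact hne (by rw [← Fself x, h])
  have VNe : ∀ (x : Fin (n+1)) (k : ℕ), k ≤ n → x.val ≠ k → x ≠ ((k:ℕ) : Fin (n+1)) := by
    intro x k hk h hx
    exact h (by rw [hx]; exact FV k hk)
  -- d inverse facts
  have hd5' : d⁻¹ ((5:ℕ):Fin (n+1)) = ((3:ℕ):Fin (n+1)) := by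
    rw [← hd3, Equiv.Perm.inv_apply_self]
  have hd3' : d⁻¹ ((3:ℕ):Fin (n+1)) = ((4:ℕ):Fin (n+1)) := by
    rw [← hd4, Equiv.Perm.inv_apply_self]
  have hdi' : ∀ i : ℕ, 5 ≤ i → i < n → d⁻¹ ((i+1:ℕ) : Fin (n+1)) = ((i:ℕ) : Fin (n+1)) := by
    intro i h1 h2; rw [← hdi i h1 h2, Equiv.Perm.inv_apply_self]
  have hd4' : d⁻¹ ((4:ℕ):Fin (n+1)) = ((n:ℕ):Fin (n+1)) := by
    rw [← hdn, Equiv.Perm.inv_apply_self]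
  have hdn' : d⁻¹ ((n:ℕ):Fin (n+1)) = ((n-1:ℕ):Fin (n+1)) := by
    have h := hdi' (n-1) (by omega) (by omega)
    rwa [show (n-1+1 : ℕ) = n by omega] at h
  -- c facts
  have hc3 : c ((3:ℕ):Fin (n+1)) = ((6:ℕ):Fin (n+1)) := by
    rw [hc, Equiv.Perm.mul_apply, hd3, hdi 5 (by omega) (by omega)]
  have hc4 : c ((4:ℕ):Fin (n+1)) = ((5:ℕ):Fin (n+1)) := by
    rw [hc, Equiv.Perm.mul_apply, hd4, hd3]
  have hci : ∀ i : ℕ, 5 ≤ i → i ≤ n-2 → c ((i:ℕ):Fin (n+1)) = ((i+2:ℕ):Fin (n+1)) := by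
    intro i h1 h2
    rw [hc, Equiv.Perm.mul_apply, hdi i h1 (by omega), hdi (i+1) (by omega) (by omega),
      show (i+1+1:ℕ) = i+2 by omega]
  have hcn1 : c ((n-1:ℕ):Fin (n+1)) = ((4:ℕ):Fin (n+1)) := by
    rw [hc, Equiv.Perm.mul_apply, show ((n-1:ℕ):Fin (n+1)) = ((n-1:ℕ):Fin (n+1)) from rfl]
    have h := hdi (n-1) (by omega) (by omega)
    rw [h, show (n-1+1 : ℕ) = n by omega, hdn]
  have hcn : c ((n:ℕ):Fin (n+1)) = ((3:ℕ):Fin (n+1)) := by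
    rw [hc, Equiv.Perm.mul_apply, hdn, hd4]
  -- c inverse facts
  have hc6' : c⁻¹ ((6:ℕ):Fin (n+1)) = ((3:ℕ):Fin (n+1)) := by
    rw [← hc3, Equiv.Perm.inv_apply_self]
  have hc5' : c⁻¹ ((5:ℕ):Fin (n+1)) = ((4:ℕ):Fin (n+1)) := by
    rw [← hc4, Equiv.Perm.inv_apply_self]
  have hc7' : c⁻¹ ((7:ℕ):Fin (n+1)) = ((5:ℕ):Fin (n+1)) := by
    rw [← hci 5 (by omega) (by omega), Equiv.Perm.inv_apply_self]
  have hc8' : c⁻¹ ((8:ℕ):Fin (n+1)) = ((6:ℕ):Fin (n+1)) := by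
    rw [← hci 6 (by omega) (by omega), Equiv.Perm.inv_apply_self]
  have hc4' : c⁻¹ ((4:ℕ):Fin (n+1)) = ((n-1:ℕ):Fin (n+1)) := by
    rw [← hcn1, Equiv.Perm.inv_apply_self]
  have hc3' : c⁻¹ ((3:ℕ):Fin (n+1)) = ((n:ℕ):Fin (n+1)) := by
    rw [← hcn, Equiv.Perm.inv_apply_self]
  -- P facts
  have hPa : ∀ x, P x = d⁻¹ (τ (d x)) := by
    intro x; rw [hPd]; simp [Equiv.Perm.mul_apply]
  have hP3 : P ((3:ℕ):Fin (n+1)) = ((4:ℕ):Fin (n+1)) := by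
    rw [hPa, hd3, hτ5, hd3']
  have hP4 : P ((4:ℕ):Fin (n+1)) = ((n-1:ℕ):Fin (n+1)) := by
    rw [hPa, hd4, hτ3, hdn']
  have hP5 : P ((5:ℕ):Fin (n+1)) = ((3:ℕ):Fin (n+1)) := by
    rw [hPa, hdi 5 (by omega) (by omega), hτ6, hd5']
  have hPn1 : P ((n-1:ℕ):Fin (n+1)) = ((n:ℕ):Fin (n+1)) := by
    have h := hdi (n-1) (by omega) (by omega)
    rw [hPa, h, show (n-1+1 : ℕ) = n by omega, hτn, hd4']
  have hPn : P ((n:ℕ):Fin (n+1)) = ((5:ℕ):Fin (n+1)) := by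
    have h := hdi' 5 (by omega) (by omega)
    rw [hPa, hdn, hτ4, h]
  have hPfix : ∀ x : Fin (n+1), x.val ≠ 3 → x.val ≠ 4 → x.val ≠ 5 → x.val ≠ n-1 → x.val ≠ n →
      P x = x := by
    intro x e3 e4 e5 en1 en
    have hxn : x.val ≤ n := Fin.is_le x
    rcases lt_or_ge x.val 3 with hlow | hhi
    · have hdx : d⁻¹ x = x := by
        conv_lhs => rw [← hdlow x hlow]
        exact Equiv.Perm.inv_apply_self d x
      rw [hPa, hdlow x hlow, hτfix x (by omega) (by omega) (by omega) (by omega) (by omega), hdx]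
    · have h6 : 6 ≤ x.val := by omega
      have h2 : x.val ≤ n - 2 := by omega
      have hx : x = ((x.val : ℕ) : Fin (n+1)) := (Fself x).symm
      rw [hPa]
      nth_rewrite 1 [hx]
      rw [hdi x.val (by omega) (by omega)]
      rw [hτfix _ (by rw [FV _ (by omega)]; omega) (by rw [FV _ (by omega)]; omega)
        (by rw [FV _ (by omega)]; omega) (by rw [FV _ (by omega)]; omega)
        (by rw [FV _ (by omega)]; omega)]
      rw [hdi' x.val (by omega) (by omega), ← hx]
  have hc5v : c ((5:ℕ):Fin (n+1)) = ((7:ℕ):Fin (n+1)) := by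
    rw [hci 5 (by omega) (by omega)]
  have hc6v : c ((6:ℕ):Fin (n+1)) = ((8:ℕ):Fin (n+1)) := by
    rw [hci 6 (by omega) (by omega)]
  set H := Subgroup.closure ({c, τ, P} : Set (Equiv.Perm (Fin (n+1)))) with hHdef
  have hcH : c ∈ H := Subgroup.subset_closure (by simp)
  have hτH : τ ∈ H := Subgroup.subset_closure (by simp)
  have hPH : P ∈ H := Subgroup.subset_closure (by simp)
  set t1 : Equiv.Perm (Fin (n+1)) := c * P * c⁻¹ with ht1def
  set t2 : Equiv.Perm (Fin (n+1)) := c * τ * c⁻¹ with ht2def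
  have ht1H : t1 ∈ H := mul_mem (mul_mem hcH hPH) (inv_mem hcH)
  have ht2H : t2 ∈ H := mul_mem (mul_mem hcH hτH) (inv_mem hcH)
  have ht1_5 : t1 ((5:ℕ):Fin (n+1)) = ((4:ℕ):Fin (n+1)) := by
    rw [ht1def, Equiv.Perm.mul_apply, Equiv.Perm.mul_apply, hc5', hP4, hcn1]
  have ht1_4 : t1 ((4:ℕ):Fin (n+1)) = ((3:ℕ):Fin (n+1)) := by
    rw [ht1def, Equiv.Perm.mul_apply, Equiv.Perm.mul_apply, hc4', hPn1, hcn]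
  have ht1_3 : t1 ((3:ℕ):Fin (n+1)) = ((7:ℕ):Fin (n+1)) := by
    rw [ht1def, Equiv.Perm.mul_apply, Equiv.Perm.mul_apply, hc3', hPn, hc5v]
  have ht1_7 : t1 ((7:ℕ):Fin (n+1)) = ((6:ℕ):Fin (n+1)) := by
    rw [ht1def, Equiv.Perm.mul_apply, Equiv.Perm.mul_apply, hc7', hP5, hc3]
  have ht1_6 : t1 ((6:ℕ):Fin (n+1)) = ((5:ℕ):Fin (n+1)) := by
    rw [ht1def, Equiv.Perm.mul_apply, Equiv.Perm.mul_apply, hc6', hP3, hc4]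
  have ht2_6 : t2 ((6:ℕ):Fin (n+1)) = ((3:ℕ):Fin (n+1)) := by
    rw [ht2def, Equiv.Perm.mul_apply, Equiv.Perm.mul_apply, hc6', hτ3, hcn]
  have ht2_3 : t2 ((3:ℕ):Fin (n+1)) = ((5:ℕ):Fin (n+1)) := by
    rw [ht2def, Equiv.Perm.mul_apply, Equiv.Perm.mul_apply, hc3', hτn, hc4]
  have ht2_5 : t2 ((5:ℕ):Fin (n+1)) = ((8:ℕ):Fin (n+1)) := by
    rw [ht2def, Equiv.Perm.mul_apply, Equiv.Perm.mul_apply, hc5', hτ4, hc6v]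
  have ht2_8 : t2 ((8:ℕ):Fin (n+1)) = ((7:ℕ):Fin (n+1)) := by
    rw [ht2def, Equiv.Perm.mul_apply, Equiv.Perm.mul_apply, hc8', hτ6, hc5v]
  have ht2_7 : t2 ((7:ℕ):Fin (n+1)) = ((6:ℕ):Fin (n+1)) := by
    rw [ht2def, Equiv.Perm.mul_apply, Equiv.Perm.mul_apply, hc7', hτ5, hc3]
  have ht1fix : ∀ x : Fin (n+1), x ≠ ((3:ℕ):Fin (n+1)) → x ≠ ((4:ℕ):Fin (n+1)) →
      x ≠ ((5:ℕ):Fin (n+1)) → x ≠ ((6:ℕ):Fin (n+1)) → x ≠ ((7:ℕ):Fin (n+1)) → t1 x = x := by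
    intro x e3 e4 e5 e6 e7
    have hx3 : c⁻¹ x ≠ ((3:ℕ):Fin (n+1)) := fun h =>
      e6 (by rw [← hc3, ← h, Equiv.Perm.apply_inv_self])
    have hx4 : c⁻¹ x ≠ ((4:ℕ):Fin (n+1)) := fun h =>
      e5 (by rw [← hc4, ← h, Equiv.Perm.apply_inv_self])
    have hx5 : c⁻¹ x ≠ ((5:ℕ):Fin (n+1)) := fun h =>
      e7 (by rw [← hc5v, ← h, Equiv.Perm.apply_inv_self])
    have hxn1 : c⁻¹ x ≠ ((n-1:ℕ):Fin (n+1)) := fun h =>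
      e4 (by rw [← hcn1, ← h, Equiv.Perm.apply_inv_self])
    have hxn : c⁻¹ x ≠ ((n:ℕ):Fin (n+1)) := fun h =>
      e3 (by rw [← hcn, ← h, Equiv.Perm.apply_inv_self])
    rw [ht1def, Equiv.Perm.mul_apply, Equiv.Perm.mul_apply,
      hPfix _ (NeV _ 3 (by omega) hx3) (NeV _ 4 (by omega) hx4) (NeV _ 5 (by omega) hx5)
        (NeV _ (n-1) (by omega) hxn1) (NeV _ n (by omega) hxn),
      Equiv.Perm.apply_inv_self]
  have ht2fix : ∀ x : Fin (n+1), x ≠ ((3:ℕ):Fin (n+1)) → x ≠ ((5:ℕ):Fin (n+1)) →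
      x ≠ ((6:ℕ):Fin (n+1)) → x ≠ ((7:ℕ):Fin (n+1)) → x ≠ ((8:ℕ):Fin (n+1)) → t2 x = x := by
    intro x e3 e5 e6 e7 e8
    have hx3 : c⁻¹ x ≠ ((3:ℕ):Fin (n+1)) := fun h =>
      e6 (by rw [← hc3, ← h, Equiv.Perm.apply_inv_self])
    have hx4 : c⁻¹ x ≠ ((4:ℕ):Fin (n+1)) := fun h =>
      e5 (by rw [← hc4, ← h, Equiv.Perm.apply_inv_self])
    have hx5 : c⁻¹ x ≠ ((5:ℕ):Fin (n+1)) := fun h =>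
      e7 (by rw [← hc5v, ← h, Equiv.Perm.apply_inv_self])
    have hx6 : c⁻¹ x ≠ ((6:ℕ):Fin (n+1)) := fun h =>
      e8 (by rw [← hc6v, ← h, Equiv.Perm.apply_inv_self])
    have hxn : c⁻¹ x ≠ ((n:ℕ):Fin (n+1)) := fun h =>
      e3 (by rw [← hcn, ← h, Equiv.Perm.apply_inv_self])
    rw [ht2def, Equiv.Perm.mul_apply, Equiv.Perm.mul_apply,
      hτfix _ (NeV _ 3 (by omega) hx3) (NeV _ 4 (by omega) hx4) (NeV _ 5 (by omega) hx5)
        (NeV _ 6 (by omega) hx6) (NeV _ n (by omega) hxn),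
      Equiv.Perm.apply_inv_self]
  have ht1'_4 : t1⁻¹ ((4:ℕ):Fin (n+1)) = ((5:ℕ):Fin (n+1)) := by
    rw [← ht1_5, Equiv.Perm.inv_apply_self]
  have ht1'_3 : t1⁻¹ ((3:ℕ):Fin (n+1)) = ((4:ℕ):Fin (n+1)) := by
    rw [← ht1_4, Equiv.Perm.inv_apply_self]
  have ht1'_7 : t1⁻¹ ((7:ℕ):Fin (n+1)) = ((3:ℕ):Fin (n+1)) := by
    rw [← ht1_3, Equiv.Perm.inv_apply_self]
  have ht1'_6 : t1⁻¹ ((6:ℕ):Fin (n+1)) = ((7:ℕ):Fin (n+1)) := by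
    rw [← ht1_7, Equiv.Perm.inv_apply_self]
  have ht1'_5 : t1⁻¹ ((5:ℕ):Fin (n+1)) = ((6:ℕ):Fin (n+1)) := by
    rw [← ht1_6, Equiv.Perm.inv_apply_self]
  have ht2'_3 : t2⁻¹ ((3:ℕ):Fin (n+1)) = ((6:ℕ):Fin (n+1)) := by
    rw [← ht2_6, Equiv.Perm.inv_apply_self]
  have ht2'_5 : t2⁻¹ ((5:ℕ):Fin (n+1)) = ((3:ℕ):Fin (n+1)) := by
    rw [← ht2_3, Equiv.Perm.inv_apply_self]
  have ht2'_8 : t2⁻¹ ((8:ℕ):Fin (n+1)) = ((5:ℕ):Fin (n+1)) := by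
    rw [← ht2_5, Equiv.Perm.inv_apply_self]
  have ht2'_7 : t2⁻¹ ((7:ℕ):Fin (n+1)) = ((8:ℕ):Fin (n+1)) := by
    rw [← ht2_8, Equiv.Perm.inv_apply_self]
  have ht2'_6 : t2⁻¹ ((6:ℕ):Fin (n+1)) = ((7:ℕ):Fin (n+1)) := by
    rw [← ht2_7, Equiv.Perm.inv_apply_self]
  have ht1'fix : ∀ x : Fin (n+1), x ≠ ((3:ℕ):Fin (n+1)) → x ≠ ((4:ℕ):Fin (n+1)) →
      x ≠ ((5:ℕ):Fin (n+1)) → x ≠ ((6:ℕ):Fin (n+1)) → x ≠ ((7:ℕ):Fin (n+1)) → t1⁻¹ x = x := by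
    intro x e3 e4 e5 e6 e7
    conv_lhs => rw [← ht1fix x e3 e4 e5 e6 e7]
    exact Equiv.Perm.inv_apply_self t1 x
  have ht2'fix : ∀ x : Fin (n+1), x ≠ ((3:ℕ):Fin (n+1)) → x ≠ ((5:ℕ):Fin (n+1)) →
      x ≠ ((6:ℕ):Fin (n+1)) → x ≠ ((7:ℕ):Fin (n+1)) → x ≠ ((8:ℕ):Fin (n+1)) → t2⁻¹ x = x := by
    intro x e3 e5 e6 e7 e8
    conv_lhs => rw [← ht2fix x e3 e5 e6 e7 e8]
    exact Equiv.Perm.inv_apply_self t2 x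
  have hT6w : t1⁻¹ * (t2 * (t2 * (t1 * (t1 * t2⁻¹)))) = cyc3 ((3:ℕ):Fin (n+1)) ((5:ℕ):Fin (n+1)) ((6:ℕ):Fin (n+1)) := by
    ext x
    simp only [Equiv.Perm.mul_apply]
    rcases eq_or_ne x ((3:ℕ):Fin (n+1)) with rfl | e3
    · rw [ht2'_3, ht1_6, ht1_5, ht2fix _ (FNe 4 3 (by omega) (by omega) (by omega)) (FNe 4 5 (by omega) (by omega) (by omega)) (FNe 4 6 (by omega) (by omega) (by omega)) (FNe 4 7 (by omega) (by omega) (by omega)) (FNe 4 8 (by omega) (by omega) (by omega)), ht2fix _ (FNe 4 3 (by omega) (by omega) (by omega)) (FNe 4 5 (by omega) (by omega) (by omega)) (FNe 4 6 (by omega) (by omega) (by omega)) (FNe 4 7 (by omega) (by omega) (by omega)) (FNe 4 8 (by omega) (by omega) (by omega)), ht1'_4, cyc3_fst _ _ _ (FNe 3 5 (by omega) (by omega) (by omega)) (FNe 5 6 (by omega) (by omega) (by omega))]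
    rcases eq_or_ne x ((4:ℕ):Fin (n+1)) with rfl | e4
    · rw [ht2'fix _ (FNe 4 3 (by omega) (by omega) (by omega)) (FNe 4 5 (by omega) (by omega) (by omega)) (FNe 4 6 (by omega) (by omega) (by omega)) (FNe 4 7 (by omega) (by omega) (by omega)) (FNe 4 8 (by omega) (by omega) (by omega)), ht1_4, ht1_3, ht2_7, ht2_6, ht1'_3, cyc3_fix _ _ _ _ (FNe 4 3 (by omega) (by omega) (by omega)) (FNe 4 5 (by omega) (by omega) (by omega)) (FNe 4 6 (by omega) (by omega) (by omega))]
    rcases eq_or_ne x ((5:ℕ):Fin (n+1)) with rfl | e5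
    · rw [ht2'_5, ht1_3, ht1_7, ht2_6, ht2_3, ht1'_5, cyc3_snd _ _ _]
    rcases eq_or_ne x ((6:ℕ):Fin (n+1)) with rfl | e6
    · rw [ht2'_6, ht1_7, ht1_6, ht2_5, ht2_8, ht1'_7, cyc3_thd _ _ _ (FNe 3 6 (by omega) (by omega) (by omega)) (FNe 5 6 (by omega) (by omega) (by omega))]
    rcases eq_or_ne x ((7:ℕ):Fin (n+1)) with rfl | e7
    · rw [ht2'_7, ht1fix _ (FNe 8 3 (by omega) (by omega) (by omega)) (FNe 8 4 (by omega) (by omega) (by omega)) (FNe 8 5 (by omega) (by omega) (by omega)) (FNe 8 6 (by omega) (by omega) (by omega)) (FNe 8 7 (by omega) (by omega) (by omega)), ht1fix _ (FNe 8 3 (by omega) (by omega) (by omega)) (FNe 8 4 (by omega) (by omega) (by omega)) (FNe 8 5 (by omega) (by omega) (by omega)) (FNe 8 6 (by omega) (by omega) (by omega)) (FNe 8 7 (by omega) (by omega) (by omega)), ht2_8, ht2_7, ht1'_6, cyc3_fix _ _ _ _ (FNe 7 3 (by omega) (by omega) (by omega)) (FNe 7 5 (by omega) (by omega) (by omega))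 (FNe 7 6 (by omega) (by omega) (by omega))]
    rcases eq_or_ne x ((8:ℕ):Fin (n+1)) with rfl | e8
    · rw [ht2'_8, ht1_5, ht1_4, ht2_3, ht2_5, ht1'fix _ (FNe 8 3 (by omega) (by omega) (by omega)) (FNe 8 4 (by omega) (by omega) (by omega)) (FNe 8 5 (by omega) (by omega) (by omega)) (FNe 8 6 (by omega) (by omega) (by omega)) (FNe 8 7 (by omega) (by omega) (by omega)), cyc3_fix _ _ _ _ (FNe 8 3 (by omega) (by omega) (by omega)) (FNe 8 5 (by omega) (by omega) (by omega)) (FNe 8 6 (by omega) (by omega) (by omega))]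
    rw [ht2'fix x e3 e5 e6 e7 e8, ht1fix x e3 e4 e5 e6 e7, ht1fix x e3 e4 e5 e6 e7, ht2fix x e3 e5 e6 e7 e8, ht2fix x e3 e5 e6 e7 e8, ht1'fix x e3 e4 e5 e6 e7, cyc3_fix _ _ _ x e3 e5 e6]
  have hT7w : t2⁻¹ * (t1 * (t2⁻¹ * (t2⁻¹ * (t1 * t1)))) = cyc3 ((3:ℕ):Fin (n+1)) ((5:ℕ):Fin (n+1)) ((7:ℕ):Fin (n+1)) := by
    ext x
    simp only [Equiv.Perm.mul_apply]
    rcases eq_or_ne x ((3:ℕ):Fin (n+1)) with rfl | e3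
    · rw [ht1_3, ht1_7, ht2'_6, ht2'_7, ht1fix _ (FNe 8 3 (by omega) (by omega) (by omega)) (FNe 8 4 (by omega) (by omega) (by omega)) (FNe 8 5 (by omega) (by omega) (by omega)) (FNe 8 6 (by omega) (by omega) (by omega)) (FNe 8 7 (by omega) (by omega) (by omega)), ht2'_8, cyc3_fst _ _ _ (FNe 3 5 (by omega) (by omega) (by omega)) (FNe 5 7 (by omega) (by omega) (by omega))]
    rcases eq_or_ne x ((4:ℕ):Fin (n+1)) with rfl | e4
    · rw [ht1_4, ht1_3, ht2'_7, ht2'_8, ht1_5, ht2'fix _ (FNe 4 3 (by omega) (by omega) (by omega)) (FNe 4 5 (by omega) (by omega) (by omega)) (FNe 4 6 (by omega) (by omega) (by omega)) (FNe 4 7 (by omega) (by omega) (by omega)) (FNe 4 8 (by omega) (by omega) (by omega)), cyc3_fix _ _ _ _ (FNe 4 3 (by omega) (by omega) (by omega)) (FNe 4 5 (by omega) (by omega) (by omega)) (FNe 4 7 (by omega) (by omega) (by omega))]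
    rcases eq_or_ne x ((5:ℕ):Fin (n+1)) with rfl | e5
    · rw [ht1_5, ht1_4, ht2'_3, ht2'_6, ht1_7, ht2'_6, cyc3_snd _ _ _]
    rcases eq_or_ne x ((6:ℕ):Fin (n+1)) with rfl | e6
    · rw [ht1_6, ht1_5, ht2'fix _ (FNe 4 3 (by omega) (by omega) (by omega)) (FNe 4 5 (by omega) (by omega) (by omega)) (FNe 4 6 (by omega) (by omega) (by omega)) (FNe 4 7 (by omega) (by omega) (by omega)) (FNe 4 8 (by omega) (by omega) (by omega)), ht2'fix _ (FNe 4 3 (by omega) (by omega) (by omega)) (FNe 4 5 (by omega) (by omega) (by omega)) (FNe 4 6 (by omega) (by omega) (by omega)) (FNe 4 7 (by omega) (by omega) (by omega)) (FNe 4 8 (by omega) (by omega) (by omega)), ht1_4, ht2'_3, cyc3_fix _ _ _ _ (FNe 6 3 (by omega) (by omega) (by omega)) (FNe 6 5 (by omega) (by omega) (by omega)) (FNe 6 7 (by omega) (by omega) (by omega))]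
    rcases eq_or_ne x ((7:ℕ):Fin (n+1)) with rfl | e7
    · rw [ht1_7, ht1_6, ht2'_5, ht2'_3, ht1_6, ht2'_5, cyc3_thd _ _ _ (FNe 3 7 (by omega) (by omega) (by omega)) (FNe 5 7 (by omega) (by omega) (by omega))]
    rcases eq_or_ne x ((8:ℕ):Fin (n+1)) with rfl | e8
    · rw [ht1fix _ (FNe 8 3 (by omega) (by omega) (by omega)) (FNe 8 4 (by omega) (by omega) (by omega)) (FNe 8 5 (by omega) (by omega) (by omega)) (FNe 8 6 (by omega) (by omega) (by omega)) (FNe 8 7 (by omega) (by omega) (by omega)), ht1fix _ (FNe 8 3 (by omega) (by omega) (by omega)) (FNe 8 4 (by omega) (by omega) (by omega)) (FNe 8 5 (by omega) (by omega) (by omega)) (FNe 8 6 (by omega) (by omega) (by omega)) (FNe 8 7 (by omega) (by omega) (by omega)), ht2'_8, ht2'_5, ht1_3, ht2'_7, cyc3_fix _ _ _ _ (FNe 8 3 (by omega) (by omega) (by omega)) (FNe 8 5 (by omega) (by omega) (by omega)) (FNe 8 7 (by omega) (by omega) (by omega))]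
    rw [ht1fix x e3 e4 e5 e6 e7, ht1fix x e3 e4 e5 e6 e7, ht2'fix x e3 e5 e6 e7 e8, ht2'fix x e3 e5 e6 e7 e8, ht1fix x e3 e4 e5 e6 e7, ht2'fix x e3 e5 e6 e7 e8, cyc3_fix _ _ _ x e3 e5 e7]
  have hT6H : cyc3 ((3:ℕ):Fin (n+1)) ((5:ℕ):Fin (n+1)) ((6:ℕ):Fin (n+1)) ∈ H := by
    rw [← hT6w]
    exact mul_mem (inv_mem ht1H) (mul_mem ht2H (mul_mem ht2H (mul_mem ht1H
      (mul_mem ht1H (inv_mem ht2H)))))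
  have hT7H : cyc3 ((3:ℕ):Fin (n+1)) ((5:ℕ):Fin (n+1)) ((7:ℕ):Fin (n+1)) ∈ H := by
    rw [← hT7w]
    exact mul_mem (inv_mem ht2H) (mul_mem ht1H (mul_mem (inv_mem ht2H)
      (mul_mem (inv_mem ht2H) (mul_mem ht1H ht1H))))
  set g : Equiv.Perm (Fin (n+1)) :=
    cyc3 ((3:ℕ):Fin (n+1)) ((5:ℕ):Fin (n+1)) ((6:ℕ):Fin (n+1)) *
    cyc3 ((3:ℕ):Fin (n+1)) ((5:ℕ):Fin (n+1)) ((7:ℕ):Fin (n+1)) with hgdef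
  have hgH : g ∈ H := mul_mem hT6H hT7H
  have hgc3 : (g * c) ((3:ℕ):Fin (n+1)) = ((3:ℕ):Fin (n+1)) := by
    rw [Equiv.Perm.mul_apply, hc3, hgdef, Equiv.Perm.mul_apply,
      cyc3_fix _ _ _ _ (FNe 6 3 (by omega) (by omega) (by omega))
        (FNe 6 5 (by omega) (by omega) (by omega)) (FNe 6 7 (by omega) (by omega) (by omega)),
      cyc3_thd _ _ _ (FNe 3 6 (by omega) (by omega) (by omega))
        (FNe 5 6 (by omega) (by omega) (by omega))]
  have hgc5 : (g * c) ((5:ℕ):Fin (n+1)) = ((5:ℕ):Fin (n+1)) := by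
    rw [Equiv.Perm.mul_apply, hc5v, hgdef, Equiv.Perm.mul_apply,
      cyc3_thd _ _ _ (FNe 3 7 (by omega) (by omega) (by omega))
        (FNe 5 7 (by omega) (by omega) (by omega)),
      cyc3_fst _ _ _ (FNe 3 5 (by omega) (by omega) (by omega))
        (FNe 5 6 (by omega) (by omega) (by omega))]
  have hstep : ∀ i : ℕ, 8 ≤ i → i ≤ n →
      cyc3 ((3:ℕ):Fin (n+1)) ((5:ℕ):Fin (n+1)) ((i-2:ℕ):Fin (n+1)) ∈ H →
      cyc3 ((3:ℕ):Fin (n+1)) ((5:ℕ):Fin (n+1)) ((i:ℕ):Fin (n+1)) ∈ H := by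
    intro i h8 hin hprev
    have hgci : (g * c) ((i-2:ℕ):Fin (n+1)) = ((i:ℕ):Fin (n+1)) := by
      rw [Equiv.Perm.mul_apply, hci (i-2) (by omega) (by omega),
        show (i-2+2:ℕ) = i by omega, hgdef, Equiv.Perm.mul_apply,
        cyc3_fix _ _ _ _ (FNe i 3 (by omega) (by omega) (by omega))
          (FNe i 5 (by omega) (by omega) (by omega)) (FNe i 7 (by omega) (by omega) (by omega)),
        cyc3_fix _ _ _ _ (FNe i 3 (by omega) (by omega) (by omega))
          (FNe i 5 (by omega) (by omega) (by omega)) (FNe i 6 (by omega) (by omega) (by omega))]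
    have hm : (g * c) * cyc3 ((3:ℕ):Fin (n+1)) ((5:ℕ):Fin (n+1)) ((i-2:ℕ):Fin (n+1)) * (g * c)⁻¹ ∈ H :=
      mul_mem (mul_mem (mul_mem hgH hcH) hprev) (inv_mem (mul_mem hgH hcH))
    rwa [cyc3_conj, hgc3, hgc5, hgci] at hm
  have Tlem : ∀ i : ℕ, 6 ≤ i → i ≤ n →
      cyc3 ((3:ℕ):Fin (n+1)) ((5:ℕ):Fin (n+1)) ((i:ℕ):Fin (n+1)) ∈ H := by
    intro i
    induction i using Nat.strong_induction_on with
    | _ i IH =>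
      intro h6 hin
      by_cases hi6 : i = 6
      · rw [hi6]; exact hT6H
      by_cases hi7 : i = 7
      · rw [hi7]; exact hT7H
      exact hstep i (by omega) hin (IH (i-2) (by omega) (by omega) (by omega))
  have hP6 : P ((6:ℕ):Fin (n+1)) = ((6:ℕ):Fin (n+1)) := by
    refine hPfix _ ?_ ?_ ?_ ?_ ?_ <;> rw [FV 6 (by omega)] <;> omega
  have hT4H : cyc3 ((3:ℕ):Fin (n+1)) ((5:ℕ):Fin (n+1)) ((4:ℕ):Fin (n+1)) ∈ H := by
    have hm : (P * cyc3 ((3:ℕ):Fin (n+1)) ((5:ℕ):Fin (n+1)) ((6:ℕ):Fin (n+1)) * P⁻¹) *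
        cyc3 ((3:ℕ):Fin (n+1)) ((5:ℕ):Fin (n+1)) ((6:ℕ):Fin (n+1)) ∈ H :=
      mul_mem (mul_mem (mul_mem hPH hT6H) (inv_mem hPH)) hT6H
    rwa [cyc3_conj, hP3, hP5, hP6,
      cyc3_mul_T4 _ _ _ _ (FNe 3 5 (by omega) (by omega) (by omega))
        (FNe 3 6 (by omega) (by omega) (by omega)) (FNe 3 4 (by omega) (by omega) (by omega))
        (FNe 5 6 (by omega) (by omega) (by omega)) (FNe 5 4 (by omega) (by omega) (by omega))
        (FNe 6 4 (by omega) (by omega) (by omega))] at hm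
  have Tall : ∀ v : Fin (n+1), 3 ≤ v.val → v ≠ ((3:ℕ):Fin (n+1)) → v ≠ ((5:ℕ):Fin (n+1)) →
      cyc3 ((3:ℕ):Fin (n+1)) ((5:ℕ):Fin (n+1)) v ∈ H := by
    intro v h3 e3 e5
    have hvn : v.val ≤ n := Fin.is_le v
    have h3' : v.val ≠ 3 := NeV v 3 (by omega) e3
    have h5' : v.val ≠ 5 := NeV v 5 (by omega) e5
    by_cases h4 : v.val = 4
    · rw [← Fself v, h4]; exact hT4H
    · rw [← Fself v]; exact Tlem v.val (by omega) hvn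
  have hs35 : ((3:ℕ):Fin (n+1)) ≠ ((5:ℕ):Fin (n+1)) := FNe 3 5 (by omega) (by omega) (by omega)
  have claim1 : ∀ a b : Fin (n+1), 3 ≤ a.val → 3 ≤ b.val → a ≠ b →
      Equiv.swap a b * Equiv.swap ((3:ℕ):Fin (n+1)) ((5:ℕ):Fin (n+1)) ∈ H := by
    intro a b ha hb hab
    by_cases ha3 : a = ((3:ℕ):Fin (n+1))
    · subst ha3
      by_cases hb5 : b = ((5:ℕ):Fin (n+1))
      · subst hb5; rw [Equiv.swap_mul_self]; exact one_mem H
      · exact Tall b hb (Ne.symm hab) hb5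
    by_cases ha5 : a = ((5:ℕ):Fin (n+1))
    · subst ha5
      by_cases hb3 : b = ((3:ℕ):Fin (n+1))
      · subst hb3; rw [Equiv.swap_comm, Equiv.swap_mul_self]; exact one_mem H
      · rw [swap_pair_id1 ((3:ℕ):Fin (n+1)) ((5:ℕ):Fin (n+1)) b hs35 (Ne.symm hb3) hab]
        have hinv : Equiv.swap ((3:ℕ):Fin (n+1)) ((5:ℕ):Fin (n+1)) * Equiv.swap ((3:ℕ):Fin (n+1)) b
            = (cyc3 ((3:ℕ):Fin (n+1)) ((5:ℕ):Fin (n+1)) b)⁻¹ := by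
          simp [cyc3, mul_inv_rev]
        rw [hinv]
        exact inv_mem (Tall b hb hb3 (Ne.symm hab))
    by_cases hb3 : b = ((3:ℕ):Fin (n+1))
    · subst hb3
      rw [Equiv.swap_comm]
      exact Tall a ha ha3 ha5
    by_cases hb5 : b = ((5:ℕ):Fin (n+1))
    · subst hb5
      rw [Equiv.swap_comm,
        swap_pair_id1 ((3:ℕ):Fin (n+1)) ((5:ℕ):Fin (n+1)) a hs35 (Ne.symm ha3) (Ne.symm ha5)]
      have hinv : Equiv.swap ((3:ℕ):Fin (n+1)) ((5:ℕ):Fin (n+1)) * Equiv.swap ((3:ℕ):Fin (n+1)) a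
          = (cyc3 ((3:ℕ):Fin (n+1)) ((5:ℕ):Fin (n+1)) a)⁻¹ := by
        simp [cyc3, mul_inv_rev]
      rw [hinv]
      exact inv_mem (Tall a ha ha3 ha5)
    · rw [swap_pair_id2 ((3:ℕ):Fin (n+1)) ((5:ℕ):Fin (n+1)) a b hs35 hab ha3 ha5 hb3 hb5]
      exact mul_mem (mul_mem (Tall a ha ha3 ha5) (inv_mem (Tall b hb hb3 hb5))) (Tall a ha ha3 ha5)
  have pair : ∀ a b u v : Fin (n+1), 3 ≤ a.val → 3 ≤ b.val → 3 ≤ u.val → 3 ≤ v.val →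
      a ≠ b → u ≠ v → Equiv.swap a b * Equiv.swap u v ∈ H := by
    intro a b u v ha hb hu hv hab huv
    have key : Equiv.swap a b * Equiv.swap u v
        = (Equiv.swap a b * Equiv.swap ((3:ℕ):Fin (n+1)) ((5:ℕ):Fin (n+1))) *
          (Equiv.swap u v * Equiv.swap ((3:ℕ):Fin (n+1)) ((5:ℕ):Fin (n+1)))⁻¹ := by
      rw [mul_inv_rev, Equiv.swap_inv, Equiv.swap_inv, ← mul_assoc,
        mul_assoc (Equiv.swap a b), Equiv.swap_mul_self, mul_one]
    rw [key]
    exact mul_mem (claim1 a b ha hb hab) (inv_mem (claim1 u v hu hv huv))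
  have main : ∀ k (ρ : Equiv.Perm (Fin (n+1))), ρ.support.card ≤ k →
      Equiv.Perm.sign ρ = 1 → (∀ x : Fin (n+1), x.val < 3 → ρ x = x) → ρ ∈ H := by
    intro k
    induction k with
    | zero =>
      intro ρ hcard _ _
      have h0 : ρ.support = ∅ := Finset.card_eq_zero.mp (Nat.le_zero.mp hcard)
      rw [Equiv.Perm.support_eq_empty_iff] at h0
      rw [h0]; exact one_mem H
    | succ k IH =>
      intro ρ hcard hsgn hfix
      by_cases h1 : ρ = 1
      · rw [h1]; exact one_mem H
      obtain ⟨a, ha⟩ : ∃ a, ρ a ≠ a := by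
        by_contra h; push_neg at h; exact h1 (Equiv.ext h)
      have hav : 3 ≤ a.val := by
        by_contra h; exact ha (hfix a (by omega))
      have hbv : 3 ≤ (ρ a).val := by
        by_contra h
        exact ha (ρ.injective (hfix (ρ a) (by omega)))
      set ρ₁ := Equiv.swap a (ρ a) * ρ with hρ₁
      have hsw1 : Equiv.Perm.sign ρ₁ = -1 := by
        rw [hρ₁, map_mul, Equiv.Perm.sign_swap (Ne.symm ha), hsgn, mul_one]
      have hfix1 : ∀ x : Fin (n+1), x.val < 3 → ρ₁ x = x := by
        intro x hx
        rw [hρ₁, Equiv.Perm.mul_apply, hfix x hx, Equiv.swap_apply_of_ne_of_ne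
          (by intro h; rw [h] at hx; omega) (by intro h; rw [h] at hx; omega)]
      have hne1 : ρ₁ ≠ 1 := by
        intro h; rw [h, map_one] at hsw1; exact absurd hsw1 (by decide)
      obtain ⟨b, hb⟩ : ∃ b, ρ₁ b ≠ b := by
        by_contra h; push_neg at h; exact hne1 (Equiv.ext h)
      have hbv1 : 3 ≤ b.val := by
        by_contra h; exact hb (hfix1 b (by omega))
      have hbv2 : 3 ≤ (ρ₁ b).val := by
        by_contra h; exact hb (ρ₁.injective (hfix1 (ρ₁ b) (by omega)))
      have hcard2 : (Equiv.swap b (ρ₁ b) * ρ₁).support.card ≤ k := by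
        have h2 := Equiv.Perm.card_support_swap_mul hb
        have h3 := Equiv.Perm.card_support_swap_mul ha
        rw [← hρ₁] at h3
        omega
      have hsgn2 : Equiv.Perm.sign (Equiv.swap b (ρ₁ b) * ρ₁) = 1 := by
        rw [map_mul, Equiv.Perm.sign_swap (Ne.symm hb), hsw1]; norm_num
      have hfix2 : ∀ x : Fin (n+1), x.val < 3 → (Equiv.swap b (ρ₁ b) * ρ₁) x = x := by
        intro x hx
        rw [Equiv.Perm.mul_apply, hfix1 x hx, Equiv.swap_apply_of_ne_of_ne
          (by intro h; rw [h] at hx; omega) (by intro h; rw [h] at hx; omega)]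
      have hmem := IH _ hcard2 hsgn2 hfix2
      have hρeq : ρ = (Equiv.swap a (ρ a) * Equiv.swap b (ρ₁ b)) * (Equiv.swap b (ρ₁ b) * ρ₁) := by
        rw [mul_assoc, Equiv.swap_mul_self_mul, hρ₁, Equiv.swap_mul_self_mul]
      rw [hρeq]
      exact mul_mem (pair a (ρ a) b (ρ₁ b) hav hbv hbv1 hbv2 (Ne.symm ha) (Ne.symm hb)) hmem
  exact main σ.support.card σ le_rfl hσs hσf

/-- `n` even, `n > 7`, `α = (3, 5, 4)`, `β = (3, 4, ..., n)` on `{1, ..., n}`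
(realized in `Equiv.Perm (Fin (n+1))`, the point `0` unused), and
`τ = βαβ⁻¹αβ⁻¹α⁻¹βα⁻¹` (composing left-to-right, so a word `x₁⋯x_k` is the Lean
product `x_k * ⋯ * x₁`). Then `(βα⁻¹)²`, `τ`, `(αβ⁻¹)⁻¹τ(αβ⁻¹)` generate the
alternating group on `{3, ..., n}`. -/
theorem stmt4 (n : ℕ) (hn : 7 < n) (heven : Even n)
    (α β : Equiv.Perm (Fin (n + 1)))
    (hα₁ : α 3 = 5) (hα₂ : α 5 = 4) (hα₃ : α 4 = 3)
    (hα₄ : ∀ x : Fin (n + 1), x ∉ ({3, 4, 5} : Set (Fin (n + 1))) → α x = x)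
    (hβ₁ : ∀ i : ℕ, 3 ≤ i → i < n → β (i : Fin (n + 1)) = ((i + 1 : ℕ) : Fin (n + 1)))
    (hβ₂ : β (n : Fin (n + 1)) = 3)
    (hβ₃ : ∀ x : Fin (n + 1), x.val < 3 → β x = x)
    (σ : Equiv.Perm (Fin (n + 1))) :
    σ ∈ Subgroup.closure
      ({(α⁻¹ * β) ^ 2,
        α⁻¹ * β * α⁻¹ * β⁻¹ * α * β⁻¹ * α * β,
        (β⁻¹ * α) * (α⁻¹ * β * α⁻¹ * β⁻¹ * α * β⁻¹ * α * β) * (β⁻¹ * α)⁻¹} :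
        Set (Equiv.Perm (Fin (n + 1)))) ↔
    (Equiv.Perm.sign σ = 1 ∧ ∀ x : Fin (n + 1), x.val < 3 → σ x = x) := by
  have FV : ∀ i : ℕ, i ≤ n → ((i : Fin (n+1))).val = i := by
    intro i h; rw [Fin.val_natCast]; exact Nat.mod_eq_of_lt (by omega)
  have FNe : ∀ i j : ℕ, i ≤ n → j ≤ n → i ≠ j → ((i : Fin (n+1))) ≠ ((j : Fin (n+1))) := by
    intro i j hi hj hij h
    apply hij
    have := congrArg Fin.val h
    rwa [FV i hi, FV j hj] at this
  have C : ∀ i j : ℕ, i = j → ((i : Fin (n+1))) = ((j : Fin (n+1))) := by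
    intro i j h; rw [h]
  have E3 : ((3:ℕ) : Fin (n+1)) = (3 : Fin (n+1)) := by norm_cast
  have E4 : ((4:ℕ) : Fin (n+1)) = (4 : Fin (n+1)) := by norm_cast
  have E5 : ((5:ℕ) : Fin (n+1)) = (5 : Fin (n+1)) := by norm_cast
  -- α in cast form
  have hA3 : α ((3:ℕ):Fin (n+1)) = ((5:ℕ):Fin (n+1)) := by rw [E3, hα₁]; exact E5.symm
  have hA5 : α ((5:ℕ):Fin (n+1)) = ((4:ℕ):Fin (n+1)) := by rw [E5, hα₂]; exact E4.symm
  have hA4 : α ((4:ℕ):Fin (n+1)) = ((3:ℕ):Fin (n+1)) := by rw [E4, hα₃]; exact E3.symm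
  have hαfix : ∀ x : Fin (n+1), x ≠ ((3:ℕ):Fin (n+1)) → x ≠ ((4:ℕ):Fin (n+1)) →
      x ≠ ((5:ℕ):Fin (n+1)) → α x = x := by
    intro x h3 h4 h5
    refine hα₄ x ?_
    simp only [Set.mem_insert_iff, Set.mem_singleton_iff]
    push_neg
    exact ⟨by rw [← E3]; exact h3, by rw [← E4]; exact h4, by rw [← E5]; exact h5⟩
  have hA5' : α⁻¹ ((5:ℕ):Fin (n+1)) = ((3:ℕ):Fin (n+1)) := by
    rw [← hA3, Equiv.Perm.inv_apply_self]
  have hA3' : α⁻¹ ((3:ℕ):Fin (n+1)) = ((4:ℕ):Fin (n+1)) := by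
    rw [← hA4, Equiv.Perm.inv_apply_self]
  have hA4' : α⁻¹ ((4:ℕ):Fin (n+1)) = ((5:ℕ):Fin (n+1)) := by
    rw [← hA5, Equiv.Perm.inv_apply_self]
  have hαfix' : ∀ x : Fin (n+1), x ≠ ((3:ℕ):Fin (n+1)) → x ≠ ((4:ℕ):Fin (n+1)) →
      x ≠ ((5:ℕ):Fin (n+1)) → α⁻¹ x = x := by
    intro x h3 h4 h5
    conv_lhs => rw [← hαfix x h3 h4 h5]
    exact Equiv.Perm.inv_apply_self α x
  -- β in cast form
  have hβ₂c : β ((n:ℕ):Fin (n+1)) = ((3:ℕ):Fin (n+1)) := by rw [hβ₂]; exact E3.symm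
  have hB3' : β⁻¹ ((3:ℕ):Fin (n+1)) = ((n:ℕ):Fin (n+1)) := by
    rw [← hβ₂c, Equiv.Perm.inv_apply_self]
  have hB1' : ∀ i : ℕ, 3 ≤ i → i < n → β⁻¹ ((i+1:ℕ) : Fin (n+1)) = ((i:ℕ) : Fin (n+1)) := by
    intro i h1 h2; rw [← hβ₁ i h1 h2, Equiv.Perm.inv_apply_self]
  have hβn1 : β ((n-1:ℕ):Fin (n+1)) = ((n:ℕ):Fin (n+1)) := by
    rw [hβ₁ (n-1) (by omega) (by omega), C (n-1+1) n (by omega)]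
  have hBn' : β⁻¹ ((n:ℕ):Fin (n+1)) = ((n-1:ℕ):Fin (n+1)) := by
    rw [← hβn1, Equiv.Perm.inv_apply_self]
  have hβlow' : ∀ x : Fin (n+1), x.val < 3 → β⁻¹ x = x := by
    intro x hx
    conv_lhs => rw [← hβ₃ x hx]
    exact Equiv.Perm.inv_apply_self β x
  have hαlow : ∀ x : Fin (n+1), x.val < 3 → α x = x := by
    intro x hx
    refine hαfix x ?_ ?_ ?_ <;> intro h <;> rw [h, FV _ (by omega)] at hx <;> omega
  have hαlow' : ∀ x : Fin (n+1), x.val < 3 → α⁻¹ x = x := by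
    intro x hx
    conv_lhs => rw [← hαlow x hx]
    exact Equiv.Perm.inv_apply_self α x
  -- d table
  have hd3 : (α⁻¹ * β) ((3:ℕ):Fin (n+1)) = ((5:ℕ):Fin (n+1)) := by
    rw [Equiv.Perm.mul_apply, hβ₁ 3 (by omega) (by omega), C (3+1) 4 (by omega), hA4']
  have hd4 : (α⁻¹ * β) ((4:ℕ):Fin (n+1)) = ((3:ℕ):Fin (n+1)) := by
    rw [Equiv.Perm.mul_apply, hβ₁ 4 (by omega) (by omega), C (4+1) 5 (by omega), hA5']
  have hdi : ∀ i : ℕ, 5 ≤ i → i < n →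
      (α⁻¹ * β) ((i:ℕ):Fin (n+1)) = ((i+1:ℕ):Fin (n+1)) := by
    intro i h1 h2
    rw [Equiv.Perm.mul_apply, hβ₁ i (by omega) h2,
      hαfix' _ (FNe (i+1) 3 (by omega) (by omega) (by omega))
        (FNe (i+1) 4 (by omega) (by omega) (by omega))
        (FNe (i+1) 5 (by omega) (by omega) (by omega))]
  have hdn : (α⁻¹ * β) ((n:ℕ):Fin (n+1)) = ((4:ℕ):Fin (n+1)) := by
    rw [Equiv.Perm.mul_apply, hβ₂c, hA3']
  have hdlow : ∀ x : Fin (n+1), x.val < 3 → (α⁻¹ * β) x = x := by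
    intro x hx
    rw [Equiv.Perm.mul_apply, hβ₃ x hx, hαlow' x hx]
  -- τ table
  have hw : ∀ x : Fin (n+1), (α⁻¹ * β * α⁻¹ * β⁻¹ * α * β⁻¹ * α * β) x
      = α⁻¹ (β (α⁻¹ (β⁻¹ (α (β⁻¹ (α (β x))))))) := by
    intro x; simp only [Equiv.Perm.mul_apply]
  have hτ3 : (α⁻¹ * β * α⁻¹ * β⁻¹ * α * β⁻¹ * α * β) ((3:ℕ):Fin (n+1)) = ((n:ℕ):Fin (n+1)) := by
    rw [hw, hβ₁ 3 (by omega) (by omega), C (3+1) 4 (by omega), hA4, hB3',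
      hαfix _ (FNe n 3 (by omega) (by omega) (by omega)) (FNe n 4 (by omega) (by omega) (by omega))
        (FNe n 5 (by omega) (by omega) (by omega)), hBn',
      hαfix' _ (FNe (n-1) 3 (by omega) (by omega) (by omega))
        (FNe (n-1) 4 (by omega) (by omega) (by omega))
        (FNe (n-1) 5 (by omega) (by omega) (by omega)), hβn1,
      hαfix' _ (FNe n 3 (by omega) (by omega) (by omega)) (FNe n 4 (by omega) (by omega) (by omega))
        (FNe n 5 (by omega) (by omega) (by omega))]
  have hτ4 : (α⁻¹ * β * α⁻¹ * β⁻¹ * α * β⁻¹ * α * β) ((4:ℕ):Fin (n+1)) = ((6:ℕ):Fin (n+1)) := by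
    rw [hw, hβ₁ 4 (by omega) (by omega), C (4+1) 5 (by omega), hA5,
      show β⁻¹ ((4:ℕ):Fin (n+1)) = ((3:ℕ):Fin (n+1)) by
        rw [← C (3+1) 4 (by omega), hB1' 3 (by omega) (by omega)],
      hA3,
      show β⁻¹ ((5:ℕ):Fin (n+1)) = ((4:ℕ):Fin (n+1)) by
        rw [← C (4+1) 5 (by omega), hB1' 4 (by omega) (by omega)],
      hA4', hβ₁ 5 (by omega) (by omega), C (5+1) 6 (by omega),
      hαfix' _ (FNe 6 3 (by omega) (by omega) (by omega)) (FNe 6 4 (by omega) (by omega) (by omega))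
        (FNe 6 5 (by omega) (by omega) (by omega))]
  have hτ5 : (α⁻¹ * β * α⁻¹ * β⁻¹ * α * β⁻¹ * α * β) ((5:ℕ):Fin (n+1)) = ((3:ℕ):Fin (n+1)) := by
    rw [hw, hβ₁ 5 (by omega) (by omega), C (5+1) 6 (by omega),
      hαfix _ (FNe 6 3 (by omega) (by omega) (by omega)) (FNe 6 4 (by omega) (by omega) (by omega))
        (FNe 6 5 (by omega) (by omega) (by omega)),
      show β⁻¹ ((6:ℕ):Fin (n+1)) = ((5:ℕ):Fin (n+1)) by
        rw [← C (5+1) 6 (by omega), hB1' 5 (by omega) (by omega)],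
      hA5,
      show β⁻¹ ((4:ℕ):Fin (n+1)) = ((3:ℕ):Fin (n+1)) by
        rw [← C (3+1) 4 (by omega), hB1' 3 (by omega) (by omega)],
      hA3', hβ₁ 4 (by omega) (by omega), C (4+1) 5 (by omega), hA5']
  have hτ6 : (α⁻¹ * β * α⁻¹ * β⁻¹ * α * β⁻¹ * α * β) ((6:ℕ):Fin (n+1)) = ((5:ℕ):Fin (n+1)) := by
    rw [hw, hβ₁ 6 (by omega) (by omega), C (6+1) 7 (by omega),
      hαfix _ (FNe 7 3 (by omega) (by omega) (by omega)) (FNe 7 4 (by omega) (by omega) (by omega))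
        (FNe 7 5 (by omega) (by omega) (by omega)),
      show β⁻¹ ((7:ℕ):Fin (n+1)) = ((6:ℕ):Fin (n+1)) by
        rw [← C (6+1) 7 (by omega), hB1' 6 (by omega) (by omega)],
      hαfix _ (FNe 6 3 (by omega) (by omega) (by omega)) (FNe 6 4 (by omega) (by omega) (by omega))
        (FNe 6 5 (by omega) (by omega) (by omega)),
      show β⁻¹ ((6:ℕ):Fin (n+1)) = ((5:ℕ):Fin (n+1)) by
        rw [← C (5+1) 6 (by omega), hB1' 5 (by omega) (by omega)],
      hA5', hβ₁ 3 (by omega) (by omega), C (3+1) 4 (by omega), hA4']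
  have hτn : (α⁻¹ * β * α⁻¹ * β⁻¹ * α * β⁻¹ * α * β) ((n:ℕ):Fin (n+1)) = ((4:ℕ):Fin (n+1)) := by
    rw [hw, hβ₂c, hA3,
      show β⁻¹ ((5:ℕ):Fin (n+1)) = ((4:ℕ):Fin (n+1)) by
        rw [← C (4+1) 5 (by omega), hB1' 4 (by omega) (by omega)],
      hA4, hB3',
      hαfix' _ (FNe n 3 (by omega) (by omega) (by omega)) (FNe n 4 (by omega) (by omega) (by omega))
        (FNe n 5 (by omega) (by omega) (by omega)), hβ₂c, hA3']
  have hτfix : ∀ x : Fin (n+1), x.val ≠ 3 → x.val ≠ 4 → x.val ≠ 5 → x.val ≠ 6 → x.val ≠ n →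
      (α⁻¹ * β * α⁻¹ * β⁻¹ * α * β⁻¹ * α * β) x = x := by
    intro x e3 e4 e5 e6 en
    have hxn : x.val ≤ n := Fin.is_le x
    rcases lt_or_ge x.val 3 with hlow | hhi
    · rw [hw, hβ₃ x hlow, hαlow x hlow, hβlow' x hlow, hαlow x hlow, hβlow' x hlow,
        hαlow' x hlow, hβ₃ x hlow, hαlow' x hlow]
    · have h7 : 7 ≤ x.val := by omega
      have h9 : x.val ≤ n - 1 := by omega
      have hx : x = ((x.val : ℕ) : Fin (n+1)) := (Fin.cast_val_eq_self x).symm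
      rw [hw]
      nth_rewrite 1 [hx]
      have hbx : β⁻¹ ((x.val:ℕ):Fin (n+1)) = ((x.val-1:ℕ):Fin (n+1)) := by
        rw [← C (x.val-1+1) x.val (by omega), hB1' (x.val-1) (by omega) (by omega)]
      have hbx2 : β ((x.val-1:ℕ):Fin (n+1)) = ((x.val:ℕ):Fin (n+1)) := by
        rw [hβ₁ (x.val-1) (by omega) (by omega), C (x.val-1+1) x.val (by omega)]
      rw [hβ₁ x.val (by omega) (by omega),
        hαfix _ (FNe (x.val+1) 3 (by omega) (by omega) (by omega))
          (FNe (x.val+1) 4 (by omega) (by omega) (by omega))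
          (FNe (x.val+1) 5 (by omega) (by omega) (by omega)),
        hB1' x.val (by omega) (by omega),
        hαfix _ (FNe x.val 3 (by omega) (by omega) (by omega))
          (FNe x.val 4 (by omega) (by omega) (by omega))
          (FNe x.val 5 (by omega) (by omega) (by omega)),
        hbx,
        hαfix' _ (FNe (x.val-1) 3 (by omega) (by omega) (by omega))
          (FNe (x.val-1) 4 (by omega) (by omega) (by omega))
          (FNe (x.val-1) 5 (by omega) (by omega) (by omega)),
        hbx2,
        hαfix' _ (FNe x.val 3 (by omega) (by omega) (by omega))
          (FNe x.val 4 (by omega) (by omega) (by omega))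
          (FNe x.val 5 (by omega) (by omega) (by omega)), ← hx]
  constructor
  · -- forward direction
    intro hσ
    let K : Subgroup (Equiv.Perm (Fin (n+1))) :=
      { carrier := {ρ | Equiv.Perm.sign ρ = 1 ∧ ∀ x : Fin (n+1), x.val < 3 → ρ x = x}
        one_mem' := ⟨map_one _, fun x _ => rfl⟩
        mul_mem' := by
          rintro a b ⟨ha1, ha2⟩ ⟨hb1, hb2⟩
          exact ⟨by rw [map_mul, ha1, hb1, one_mul],
            fun x hx => by rw [Equiv.Perm.mul_apply, hb2 x hx, ha2 x hx]⟩
        inv_mem' := by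
          rintro a ⟨ha1, ha2⟩
          refine ⟨by rw [map_inv, ha1, inv_one], fun x hx => ?_⟩
          rw [Equiv.Perm.inv_eq_iff_eq]
          exact (ha2 x hx).symm }
    have hsub : ({(α⁻¹ * β) ^ 2,
        α⁻¹ * β * α⁻¹ * β⁻¹ * α * β⁻¹ * α * β,
        (β⁻¹ * α) * (α⁻¹ * β * α⁻¹ * β⁻¹ * α * β⁻¹ * α * β) * (β⁻¹ * α)⁻¹} :
        Set (Equiv.Perm (Fin (n + 1)))) ⊆ (K : Set (Equiv.Perm (Fin (n+1)))) := by
      rintro g (rfl | rfl | rfl)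
      · refine ⟨by rw [map_pow]; exact Int.units_sq _, fun x hx => ?_⟩
        simp only [pow_two, Equiv.Perm.mul_apply, hβ₃ x hx, hαlow' x hx]
      · refine ⟨?_, fun x hx => ?_⟩
        · rcases Int.units_eq_one_or (Equiv.Perm.sign α) with hu | hu <;>
            rcases Int.units_eq_one_or (Equiv.Perm.sign β) with hv | hv <;>
            simp [map_mul, map_inv, hu, hv]
        · rw [hw, hβ₃ x hx, hαlow x hx, hβlow' x hx, hαlow x hx, hβlow' x hx,
            hαlow' x hx, hβ₃ x hx, hαlow' x hx]
      · refine ⟨?_, fun x hx => ?_⟩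
        · rcases Int.units_eq_one_or (Equiv.Perm.sign α) with hu | hu <;>
            rcases Int.units_eq_one_or (Equiv.Perm.sign β) with hv | hv <;>
            simp [map_mul, map_inv, hu, hv]
        · rw [mul_inv_rev, inv_inv]
          simp only [Equiv.Perm.mul_apply, hβ₃ x hx, hαlow x hx, hβlow' x hx, hαlow' x hx]
    exact ((Subgroup.closure_le K).2 hsub) hσ
  · rintro ⟨hσs, hσf⟩
    exact aux n hn (α⁻¹ * β) ((α⁻¹ * β) ^ 2)
      (α⁻¹ * β * α⁻¹ * β⁻¹ * α * β⁻¹ * α * β)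
      ((β⁻¹ * α) * (α⁻¹ * β * α⁻¹ * β⁻¹ * α * β⁻¹ * α * β) * (β⁻¹ * α)⁻¹)
      (pow_two _) (by rw [mul_inv_rev, mul_inv_rev, inv_inv, inv_inv])
      hd3 hd4 hdi hdn hdlow hτ3 hτ4 hτ5 hτ6 hτn hτfix σ hσs hσf
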